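/- Let (V,ω) be a 4-dimensional real symplectic vector space and j : V → V linear with ω(jX,Y) = ω(X,jY) for all X,Y and j² = -f²·id for some real f ≠ 0. Then for θ(X,Y) := ω(jX,Y) one has θ∧θ = f²·(ω∧ω) as 4-forms on V. -/

import Mathlib

/-- The wedge product of two alternating 2-forms, evaluated on four vectors
(standard shuffle formula). -/
def wedge2 {V : Type*} [AddCommGroup V] [Module ℝ V]
    (θ ω : V →ₗ[ℝ] V →ₗ[ℝ] ℝ) (a b c d : V) : ℝ :=
  θ a b * ω c d - θ a c * ω b d + θ a d * ω b c
    + θ c d * ω a b - θ b d * ω a c + θ b c * ω a d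

section aux
variable {V : Type*} [AddCommGroup V] [Module ℝ V]

lemma bil_anti (θ : V →ₗ[ℝ] V →ₗ[ℝ] ℝ) (halt : ∀ x, θ x x = 0) (x y : V) :
    θ y x = -θ x y := by
  have h := halt (x + y)
  simp only [map_add, LinearMap.add_apply, halt x, halt y] at h
  linarith

lemma wedge2_swap01 (θ : V →ₗ[ℝ] V →ₗ[ℝ] ℝ) (halt : ∀ x, θ x x = 0) (a b c d : V) :
    wedge2 θ θ b a c d = - wedge2 θ θ a b c d := by
  simp only [wedge2]
  linear_combination (2 * θ c d) * bil_anti θ halt a b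

lemma wedge2_swap12 (θ : V →ₗ[ℝ] V →ₗ[ℝ] ℝ) (halt : ∀ x, θ x x = 0) (a b c d : V) :
    wedge2 θ θ a c b d = - wedge2 θ θ a b c d := by
  simp only [wedge2]
  linear_combination (2 * θ a d) * bil_anti θ halt b c

lemma wedge2_swap23 (θ : V →ₗ[ℝ] V →ₗ[ℝ] ℝ) (halt : ∀ x, θ x x = 0) (a b c d : V) :
    wedge2 θ θ a b d c = - wedge2 θ θ a b c d := by
  simp only [wedge2]
  linear_combination (2 * θ a b) * bil_anti θ halt c d

lemma wedge2_eq_zero (θ : V →ₗ[ℝ] V →ₗ[ℝ] ℝ) (halt : ∀ x, θ x x = 0) (a b c d : V)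
    (h : a = b ∨ a = c ∨ a = d ∨ b = c ∨ b = d ∨ c = d) :
    wedge2 θ θ a b c d = 0 := by
  have z01 : ∀ x y z : V, wedge2 θ θ x x y z = 0 := by
    intro x y z
    simp only [wedge2]
    linear_combination (2 * θ y z) * halt x
  have z12 : ∀ x y z : V, wedge2 θ θ x y y z = 0 := by
    intro x y z
    have := wedge2_swap12 θ halt x y y z
    linarith
  have z23 : ∀ x y z : V, wedge2 θ θ x y z z = 0 := by
    intro x y z
    have := wedge2_swap23 θ halt x y z z
    linarith
  rcases h with h | h | h | h | h | h
  · subst h; exact z01 _ _ _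
  · subst h
    have := wedge2_swap12 θ halt a a b d
    rw [z01] at this; linarith
  · subst h
    have z02 : ∀ x y z : V, wedge2 θ θ x y x z = 0 := by
      intro x y z
      have := wedge2_swap12 θ halt x x y z
      rw [z01] at this; linarith
    have h1 := wedge2_swap23 θ halt a b a c
    rw [z02] at h1; linarith
  · subst h; exact z12 _ _ _
  · subst h
    have h1 := wedge2_swap23 θ halt a b b c
    rw [z12 a b c] at h1
    linarith
  · subst h; exact z23 _ _ _

end aux

section aux2
variable {V : Type*} [AddCommGroup V] [Module ℝ V]

lemma finval0' : ((0:Fin 4):ℕ) = 0 := rfl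
lemma finval1' : ((1:Fin 4):ℕ) = 1 := rfl
lemma finval2' : ((2:Fin 4):ℕ) = 2 := rfl
lemma finval3' : ((3:Fin 4):ℕ) = 3 := rfl

def wedgeAlt (θ : V →ₗ[ℝ] V →ₗ[ℝ] ℝ) (halt : ∀ x, θ x x = 0) :
    V [⋀^Fin 4]→ₗ[ℝ] ℝ where
  toFun v := wedge2 θ θ (v 0) (v 1) (v 2) (v 3)
  map_update_add' := by
    intro inst v i x y
    rw [Subsingleton.elim inst (instDecidableEqFin 4)]
    fin_cases i <;>
      (simp only [wedge2, Function.update_apply, Fin.ext_iff, finval0', finval1', finval2',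
        finval3'];
       norm_num [map_add];
       try ring)
  map_update_smul' := by
    intro inst v i c x
    rw [Subsingleton.elim inst (instDecidableEqFin 4)]
    fin_cases i <;>
      (simp only [wedge2, Function.update_apply, Fin.ext_iff, finval0', finval1', finval2',
        finval3'];
       norm_num [map_smul, smul_eq_mul];
       try ring)
  map_eq_zero_of_eq' v i jj hv hne := by
    apply wedge2_eq_zero θ halt
    fin_cases i <;> fin_cases jj <;> simp_all [Fin.ext_iff]

lemma wedgeAlt_apply (θ : V →ₗ[ℝ] V →ₗ[ℝ] ℝ) (halt : ∀ x, θ x x = 0) (v : Fin 4 → V) :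
    wedgeAlt θ halt v = wedge2 θ θ (v 0) (v 1) (v 2) (v 3) := rfl

end aux2

theorem theta_wedge_theta_eq
    {V : Type*} [AddCommGroup V] [Module ℝ V] [FiniteDimensional ℝ V]
    (hdim : Module.finrank ℝ V = 4)
    (ω : V →ₗ[ℝ] V →ₗ[ℝ] ℝ)
    (hω_alt : ∀ x : V, ω x x = 0)
    (hω_nondeg : ∀ x : V, (∀ y : V, ω x y = 0) → x = 0)
    (j : V →ₗ[ℝ] V)
    (hsym : ∀ X Y : V, ω (j X) Y = ω X (j Y))
    (f : ℝ) (hf : f ≠ 0)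
    (hj2 : ∀ X : V, j (j X) = -(f ^ 2) • X)
    (θ : V →ₗ[ℝ] V →ₗ[ℝ] ℝ)
    (hθ : ∀ X Y : V, θ X Y = ω (j X) Y) :
    ∀ a b c d : V, wedge2 θ θ a b c d = f ^ 2 * wedge2 ω ω a b c d := by
  have hθ_alt : ∀ x : V, θ x x = 0 := by
    intro x
    have h1 : ω (j x) x = ω x (j x) := hsym x x
    have h2 : ω x (j x) = -ω (j x) x := bil_anti ω hω_alt (j x) x
    rw [hθ]; linarith
  have hxjx : ∀ x : V, ω x (j x) = 0 := by
    intro x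
    have h1 : ω (j x) x = ω x (j x) := hsym x x
    have h2 : ω x (j x) = -ω (j x) x := bil_anti ω hω_alt (j x) x
    linarith
  have hjxx : ∀ x : V, ω (j x) x = 0 := by
    intro x; rw [hsym]; exact hxjx x
  have hjj : ∀ x y : V, ω (j x) (j y) = -(f ^ 2) * ω x y := by
    intro x y
    rw [hsym, hj2 y, map_smul, smul_eq_mul]
  -- key computation on adapted quadruples
  have key : ∀ a c : V,
      wedge2 θ θ a (j a) c (j c) = f ^ 2 * wedge2 ω ω a (j a) c (j c) := by
    intro a c
    simp only [wedge2, hθ, hj2 a]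
    simp only [map_smul, LinearMap.smul_apply, smul_eq_mul, hjj a a, hjj a c, hjj c c,
      hω_alt, hxjx, hsym a c]
    ring
  -- choose an adapted quadruple which is a basis
  have h4pos : 0 < Module.finrank ℝ V := by rw [hdim]; norm_num
  have : Nontrivial V := Module.nontrivial_of_finrank_pos h4pos
  obtain ⟨a, ha⟩ := exists_ne (0 : V)
  have hc : ∃ c : V, ω a c ≠ 0 := by
    by_contra h
    push_neg at h
    exact ha (hω_nondeg a h)
  obtain ⟨c, hp⟩ := hc
  have hpos : 0 < f ^ 2 * ω a c ^ 2 + ω a (j c) ^ 2 := by positivity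
  have hli : LinearIndependent ℝ ![a, j a, c, j c] := by
    rw [Fintype.linearIndependent_iff]
    intro g hg
    have hsum : g 0 • a + g 1 • (j a) + g 2 • c + g 3 • (j c) = 0 := by
      simpa [Fin.sum_univ_four, add_assoc] using hg
    have hjcc : ω (j c) c = 0 := hjxx c
    have hjac : ω (j a) c = ω a (j c) := hsym a c
    have hjca : ω (j c) a = -ω a (j c) := by
      rw [hsym c a, bil_anti ω hω_alt (j a) c, hjac]
    have hca : ω c a = -ω a c := bil_anti ω hω_alt a c
    have hjajc : ω (j a) (j c) = -(f ^ 2) * ω a c := hjj a c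
    have hjcja : ω (j c) (j a) = f ^ 2 * ω a c := by
      rw [hjj c a, hca]; ring
    have hcja : ω c (j a) = -ω a (j c) := by
      rw [bil_anti ω hω_alt (j a) c, hjac]
    have e1 := congrArg (fun v => ω v c) hsum
    simp only [map_add, map_smul, LinearMap.add_apply, LinearMap.smul_apply,
      smul_eq_mul, map_zero, LinearMap.zero_apply, hω_alt, hjcc, hjac,
      mul_zero, add_zero] at e1
    have e2 := congrArg (fun v => ω v (j c)) hsum
    simp only [map_add, map_smul, LinearMap.add_apply, LinearMap.smul_apply,
      smul_eq_mul, map_zero, LinearMap.zero_apply, hω_alt, hxjx, hjajc,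
      mul_zero, add_zero] at e2
    have e3 := congrArg (fun v => ω v a) hsum
    simp only [map_add, map_smul, LinearMap.add_apply, LinearMap.smul_apply,
      smul_eq_mul, map_zero, LinearMap.zero_apply, hω_alt, hjxx, hca, hjca,
      mul_zero, zero_add, add_zero] at e3
    have e4 := congrArg (fun v => ω v (j a)) hsum
    simp only [map_add, map_smul, LinearMap.add_apply, LinearMap.smul_apply,
      smul_eq_mul, map_zero, LinearMap.zero_apply, hω_alt, hxjx, hjxx, hcja, hjcja,
      mul_zero, zero_add, add_zero] at e4
    have E0 : g 0 * (f ^ 2 * ω a c ^ 2 + ω a (j c) ^ 2) = 0 := by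
      linear_combination (f ^ 2 * ω a c) * e1 + ω a (j c) * e2
    have hg0 : g 0 = 0 := by
      rcases mul_eq_zero.mp E0 with h | h
      · exact h
      · exact absurd h hpos.ne'
    have E1 : g 1 * (f ^ 2 * ω a c ^ 2 + ω a (j c) ^ 2) = 0 := by
      linear_combination ω a (j c) * e1 - ω a c * e2
    have hg1 : g 1 = 0 := by
      rcases mul_eq_zero.mp E1 with h | h
      · exact h
      · exact absurd h hpos.ne'
    have E2 : g 2 * (f ^ 2 * ω a c ^ 2 + ω a (j c) ^ 2) = 0 := by
      linear_combination (-(f ^ 2 * ω a c)) * e3 - ω a (j c) * e4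
    have hg2 : g 2 = 0 := by
      rcases mul_eq_zero.mp E2 with h | h
      · exact h
      · exact absurd h hpos.ne'
    have E3 : g 3 * (f ^ 2 * ω a c ^ 2 + ω a (j c) ^ 2) = 0 := by
      linear_combination (-(ω a (j c))) * e3 + ω a c * e4
    have hg3 : g 3 = 0 := by
      rcases mul_eq_zero.mp E3 with h | h
      · exact h
      · exact absurd h hpos.ne'
    intro i
    fin_cases i <;> assumption
  have hcard : Fintype.card (Fin 4) = Module.finrank ℝ V := by simp [hdim]
  let e : Module.Basis (Fin 4) ℝ V := basisOfLinearIndependentOfCardEqFinrank hli hcard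
  have hce : ⇑e = ![a, j a, c, j c] :=
    coe_basisOfLinearIndependentOfCardEqFinrank hli hcard
  set T := wedgeAlt θ hθ_alt with hTdef
  set W := wedgeAlt ω hω_alt with hWdef
  have hT := T.eq_smul_basis_det e
  have hW := W.eq_smul_basis_det e
  have hTe : T ⇑e = f ^ 2 * W ⇑e := by
    rw [hce]
    show wedge2 θ θ _ _ _ _ = f ^ 2 * wedge2 ω ω _ _ _ _
    exact key a c
  intro x y z w
  have hx1 : wedge2 θ θ x y z w = T ![x, y, z, w] := rfl
  have hx2 : wedge2 ω ω x y z w = W ![x, y, z, w] := rfl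
  rw [hx1, hx2, hT, hW, hTe]
  simp only [AlternatingMap.smul_apply, smul_eq_mul]
  ring
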